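/- Let α > 1/2, set γ(α) = α/(2α−1) and z(y,α) = y²(2α−1)/2, and let G(y,α) = y·M(γ(α), 3/2, z(y,α)) + [Γ(γ(α)−1/2) / (√(2(2α−1))·Γ(γ(α)))]·M(γ(α)−1/2, 1/2, z(y,α)). Then for every constant C ∈ ℝ the function f(y) = C·G(y,α) is twice continuously differentiable on ℝ and satisfies f''(y) − (2α−1) y f'(y) − f(y) = 0 for all y ∈ ℝ. -/

import Mathlib

open Real Filter Polynomial

/-- Confluent hypergeometric function of the first kind,
`M(γ,β,z) = ∑ (γ)⁽ⁿ⁾ zⁿ / ((β)⁽ⁿ⁾ n!)`. -/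
noncomputable def M (γ β z : ℝ) : ℝ :=
  ∑' n : ℕ, ((ascPochhammer ℝ n).eval γ * z ^ n) /
    ((ascPochhammer ℝ n).eval β * (Nat.factorial n : ℝ))

/-- The candidate solution for `α > 1/2`. -/
noncomputable def G (α y : ℝ) : ℝ :=
  y * M (α / (2 * α - 1)) (3 / 2) (y ^ 2 * (2 * α - 1) / 2) +
    Real.Gamma (α / (2 * α - 1) - 1 / 2) /
      (Real.sqrt (2 * (2 * α - 1)) * Real.Gamma (α / (2 * α - 1))) *
    M (α / (2 * α - 1) - 1 / 2) (1 / 2) (y ^ 2 * (2 * α - 1) / 2)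

section AuxHelpers


/-- Coefficients summable against every geometric weight. -/
def Pc (c : ℕ → ℝ) : Prop := ∀ r : ℝ, 0 < r → Summable (fun n => |c n| * r ^ n)

noncomputable def sh (c : ℕ → ℝ) : ℕ → ℝ := fun n => ((n : ℝ) + 1) * c (n + 1)

lemma nat_le_two_pow (n : ℕ) : (n : ℝ) ≤ 2 ^ n := by
  exact_mod_cast (Nat.lt_two_pow_self (n := n)).le

lemma Pc.mul_nat {c : ℕ → ℝ} (hc : Pc c) : Pc (fun n => (n : ℝ) * c n) := by
  intro r hr
  refine Summable.of_nonneg_of_le (fun n => by positivity) (fun n => ?_) (hc (2 * r) (by positivity))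
  have h1 : (n : ℝ) ≤ 2 ^ n := nat_le_two_pow n
  have h2 : (0:ℝ) ≤ |c n| * r ^ n := by positivity
  calc |(n : ℝ) * c n| * r ^ n = (n : ℝ) * (|c n| * r ^ n) := by
        rw [abs_mul, Nat.abs_cast]; ring
    _ ≤ 2 ^ n * (|c n| * r ^ n) := by nlinarith
    _ = |c n| * (2 * r) ^ n := by rw [mul_pow]; ring

lemma Pc.shift {c : ℕ → ℝ} (hc : Pc c) : Pc (sh c) := by
  intro r hr
  have key : Summable (fun n => |c (n + 1)| * (2 * r) ^ (n + 1)) :=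
    (_root_.summable_nat_add_iff (f := fun n => |c n| * (2 * r) ^ n) 1).2
      (hc (2 * r) (by positivity))
  refine Summable.of_nonneg_of_le (fun n => by positivity) (fun n => ?_)
    (key.mul_left (1 / r))
  have h1 : ((n : ℝ) + 1) ≤ 2 ^ (n + 1) := by
    have := nat_le_two_pow n
    have h2 : (1:ℝ) ≤ 2 ^ n := one_le_pow₀ (by norm_num)
    rw [pow_succ]; linarith
  have h2 : (0:ℝ) ≤ |c (n+1)| := abs_nonneg _
  have hrn : (0:ℝ) < r ^ n := by positivity
  have hsh : sh c n = ((n : ℝ) + 1) * c (n + 1) := rfl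
  calc |sh c n| * r ^ n = ((n : ℝ) + 1) * |c (n + 1)| * r ^ n := by
        rw [hsh, abs_mul, abs_of_nonneg (by positivity : (0:ℝ) ≤ (n:ℝ) + 1)]
    _ ≤ 2 ^ (n + 1) * |c (n + 1)| * r ^ n :=
        mul_le_mul_of_nonneg_right (mul_le_mul_of_nonneg_right h1 h2) hrn.le
    _ = 1 / r * (|c (n + 1)| * (2 * r) ^ (n + 1)) := by
        rw [mul_pow]; field_simp; ring

lemma Pc.summable {c : ℕ → ℝ} (hc : Pc c) (y : ℝ) :
    Summable (fun n => c n * y ^ n) := by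
  refine Summable.of_norm_bounded (hc (|y| + 1) (by positivity)) (fun n => ?_)
  calc ‖c n * y ^ n‖ = |c n| * |y| ^ n := by
        rw [norm_mul, norm_pow, Real.norm_eq_abs, Real.norm_eq_abs]
    _ ≤ |c n| * (|y| + 1) ^ n := by
        gcongr <;> linarith [abs_nonneg y]

lemma deriv_term_bound {c : ℕ → ℝ} {R : ℝ} (hR : 0 < R) {z : ℝ} (hz : |z| ≤ R) (n : ℕ) :
    |c n * ((n : ℝ) * z ^ (n - 1))| ≤ |c n| * ((n : ℝ) * R ^ n) / R := by
  rcases Nat.eq_zero_or_pos n with rfl | hn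
  · simp
  · have hid : R ^ n = R ^ (n - 1) * R := by
      conv_lhs => rw [← Nat.succ_pred_eq_of_pos hn]
      rw [pow_succ]
      rfl
    have h1 : |z| ^ (n - 1) ≤ R ^ (n - 1) := pow_le_pow_left₀ (abs_nonneg z) hz _
    have h2 : (0:ℝ) ≤ (n : ℝ) * |c n| := by positivity
    calc |c n * ((n:ℝ) * z ^ (n-1))| = (n:ℝ) * |c n| * |z| ^ (n - 1) := by
          rw [abs_mul, abs_mul, Nat.abs_cast, abs_pow]; ring
      _ ≤ (n:ℝ) * |c n| * R ^ (n - 1) := by nlinarith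
      _ = |c n| * ((n:ℝ) * R ^ n) / R := by rw [hid]; field_simp

lemma hasDerivAt_S {c : ℕ → ℝ} (hc : Pc c) (y : ℝ) :
    HasDerivAt (fun z => ∑' n, c n * z ^ n) (∑' n, sh c n * y ^ n) y := by
  set R : ℝ := |y| + 1 with hR
  have hR0 : 0 < R := by positivity
  have hyR : y ∈ Metric.ball (0:ℝ) R := by
    simp [hR, Real.norm_eq_abs]
  set u : ℕ → ℝ := fun n => |c n| * ((n : ℝ) * R ^ n) / R with hu
  have hu_summable : Summable u := by
    have h := (Pc.mul_nat hc) R hR0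
    refine Summable.of_nonneg_of_le (fun n => ?_) (fun n => ?_) (h.mul_left (1 / R))
    · simp only [hu]; positivity
    · simp only [hu]
      rw [abs_mul, Nat.abs_cast, div_eq_mul_inv]
      apply le_of_eq; field_simp
  have key : HasDerivAt (fun z => ∑' n, c n * z ^ n)
      (∑' n, c n * ((n : ℝ) * y ^ (n - 1))) y := by
    refine hasDerivAt_tsum_of_isPreconnected (y₀ := 0) hu_summable Metric.isOpen_ball
      (convex_ball (0:ℝ) R).isPreconnected
      (fun n z _ => (hasDerivAt_pow n z).const_mul (c n)) (fun n z hz => ?_) ?_ ?_ hyR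
    · rw [Real.norm_eq_abs]
      rw [Metric.mem_ball, Real.dist_eq, sub_zero] at hz
      exact deriv_term_bound hR0 hz.le n
    · exact Metric.mem_ball_self hR0
    · refine summable_of_ne_finset_zero (s := {0}) (fun n hn => ?_)
      simp only [Finset.mem_singleton] at hn
      rw [zero_pow hn, mul_zero]
  have hF : Summable (fun n => c n * ((n : ℝ) * y ^ (n - 1))) := by
    refine Summable.of_norm_bounded hu_summable (fun n => ?_)
    rw [Real.norm_eq_abs]
    exact deriv_term_bound hR0 (by rw [hR]; linarith [abs_nonneg y]) n
  convert key using 1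
  rw [hF.tsum_eq_zero_add]
  simp only [Nat.cast_zero, zero_mul, mul_zero, zero_add]
  apply tsum_congr
  intro n
  simp only [sh, Nat.cast_add, Nat.cast_one, Nat.add_sub_cancel]
  ring

lemma deriv_S {c : ℕ → ℝ} (hc : Pc c) :
    deriv (fun z => ∑' n, c n * z ^ n) = fun y => ∑' n, sh c n * y ^ n :=
  funext fun y => (hasDerivAt_S hc y).deriv

lemma differentiable_S {c : ℕ → ℝ} (hc : Pc c) :
    Differentiable ℝ (fun z => ∑' n, c n * z ^ n) :=
  fun y => (hasDerivAt_S hc y).differentiableAt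

lemma contDiff_two_S {c : ℕ → ℝ} (hc : Pc c) :
    ContDiff ℝ 2 (fun z => ∑' n, c n * z ^ n) := by
  have h2 : (2 : WithTop ℕ∞) = 1 + 1 := by norm_num
  rw [h2, contDiff_succ_iff_deriv]
  refine ⟨differentiable_S hc, by simp, ?_⟩
  rw [deriv_S hc, contDiff_one_iff_deriv]
  exact ⟨differentiable_S hc.shift, by
    rw [deriv_S hc.shift]
    exact (differentiable_S hc.shift.shift).continuous⟩



lemma poch_ratio_le {x b : ℝ} (hx : 0 ≤ x) (hb : 0 < b) (m : ℕ) :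
    (ascPochhammer ℝ m).eval x ≤ (1 + x / b) ^ m * (ascPochhammer ℝ m).eval b := by
  induction m with
  | zero => simp
  | succ m ih =>
    rw [ascPochhammer_succ_eval, ascPochhammer_succ_eval, pow_succ]
    have hpb : 0 < (ascPochhammer ℝ m).eval b := ascPochhammer_pos m b hb
    have hxm : (0:ℝ) ≤ x + m := by positivity
    have key : x + (m:ℝ) ≤ (1 + x / b) * (b + m) := by
      have h1 : (1 + x / b) * (b + m) = b + m + x + x * m / b := by field_simp; ring
      have h2 : 0 ≤ x * m / b := by positivity
      rw [h1]; linarith [hb.le]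
    calc (ascPochhammer ℝ m).eval x * (x + m)
        ≤ ((1 + x / b) ^ m * (ascPochhammer ℝ m).eval b) * ((1 + x / b) * (b + m)) := by
          apply mul_le_mul ih key hxm
          positivity
      _ = (1 + x / b) ^ m * (1 + x / b) * ((ascPochhammer ℝ m).eval b * (b + m)) := by ring

lemma summable_half {x b K r : ℝ} (hx : 0 < x) (hb : 0 < b) (hK : 0 < K) (hr : 0 < r) :
    Summable (fun m : ℕ => ((ascPochhammer ℝ m).eval x * K ^ m) /
      ((ascPochhammer ℝ m).eval b * (Nat.factorial m : ℝ)) * r ^ (2 * m)) := by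
  have main := Real.summable_pow_div_factorial ((1 + x / b) * K * r ^ 2)
  refine Summable.of_nonneg_of_le (fun m => ?_) (fun m => ?_) main
  · have hpx := ascPochhammer_pos m x hx
    have hpb := ascPochhammer_pos m b hb
    have hf : (0:ℝ) < (Nat.factorial m : ℝ) := by exact_mod_cast Nat.factorial_pos m
    positivity
  · have hpx := ascPochhammer_pos m x hx
    have hpb := ascPochhammer_pos m b hb
    have hf : (0:ℝ) < (Nat.factorial m : ℝ) := by exact_mod_cast Nat.factorial_pos m
    have hb1 := poch_ratio_le hx.le hb m
    have e1 : ((ascPochhammer ℝ m).eval x * K ^ m) /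
        ((ascPochhammer ℝ m).eval b * (Nat.factorial m : ℝ)) * r ^ (2 * m)
        = ((ascPochhammer ℝ m).eval x * (K ^ m * (r ^ 2) ^ m)) /
          ((ascPochhammer ℝ m).eval b * (Nat.factorial m : ℝ)) := by
      rw [pow_mul]; ring
    have e2 : ((1 + x / b) * K * r ^ 2) ^ m / (Nat.factorial m : ℝ)
        = (((1 + x / b) ^ m * (ascPochhammer ℝ m).eval b) * (K ^ m * (r ^ 2) ^ m)) /
          ((ascPochhammer ℝ m).eval b * (Nat.factorial m : ℝ)) := by
      rw [mul_pow, mul_pow]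
      field_simp
    rw [e1, e2]
    gcongr



noncomputable def co (α : ℝ) : ℕ → ℝ := fun n =>
  if Even n then
    Real.Gamma (α / (2 * α - 1) - 1 / 2) /
        (Real.sqrt (2 * (2 * α - 1)) * Real.Gamma (α / (2 * α - 1))) *
      ((ascPochhammer ℝ (n / 2)).eval (α / (2 * α - 1) - 1 / 2) * ((2 * α - 1) / 2) ^ (n / 2)) /
      ((ascPochhammer ℝ (n / 2)).eval (1 / 2 : ℝ) * (Nat.factorial (n / 2) : ℝ))
  else
    ((ascPochhammer ℝ (n / 2)).eval (α / (2 * α - 1)) * ((2 * α - 1) / 2) ^ (n / 2)) /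
      ((ascPochhammer ℝ (n / 2)).eval (3 / 2 : ℝ) * (Nat.factorial (n / 2) : ℝ))

lemma co_even (α : ℝ) (m : ℕ) : co α (2 * m) =
    Real.Gamma (α / (2 * α - 1) - 1 / 2) /
        (Real.sqrt (2 * (2 * α - 1)) * Real.Gamma (α / (2 * α - 1))) *
      ((ascPochhammer ℝ m).eval (α / (2 * α - 1) - 1 / 2) * ((2 * α - 1) / 2) ^ m) /
      ((ascPochhammer ℝ m).eval (1 / 2 : ℝ) * (Nat.factorial m : ℝ)) := by
  have h : 2 * m / 2 = m := by omega
  rw [co, if_pos (even_two_mul m), h]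

lemma co_odd (α : ℝ) (m : ℕ) : co α (2 * m + 1) =
    ((ascPochhammer ℝ m).eval (α / (2 * α - 1)) * ((2 * α - 1) / 2) ^ m) /
      ((ascPochhammer ℝ m).eval (3 / 2 : ℝ) * (Nat.factorial m : ℝ)) := by
  have h : (2 * m + 1) / 2 = m := by omega
  have he : ¬ Even (2 * m + 1) := by simp [Nat.even_add_one, Nat.even_mul]
  rw [co, if_neg he, h]

lemma rec_co {α : ℝ} (hα : 1 / 2 < α) (n : ℕ) :
    ((n : ℝ) + 1) * ((n : ℝ) + 2) * co α (n + 2) = ((2 * α - 1) * n + 1) * co α n := by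
  have hk : (0:ℝ) < 2 * α - 1 := by linarith
  rcases Nat.even_or_odd n with he | ho
  · obtain ⟨m, rfl⟩ := he
    rw [show m + m + 2 = 2 * (m + 1) from by ring, show m + m = 2 * m from by ring]
    rw [co_even α (m + 1), co_even α m, ascPochhammer_succ_eval, ascPochhammer_succ_eval,
      pow_succ, Nat.factorial_succ]
    have hPb : (0:ℝ) < (ascPochhammer ℝ m).eval (1/2 : ℝ) :=
      ascPochhammer_pos m _ (by norm_num)
    have hF : (0:ℝ) < (Nat.factorial m : ℝ) := by exact_mod_cast Nat.factorial_pos m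
    set Q := Real.Gamma (α / (2 * α - 1) - 1 / 2) /
        (Real.sqrt (2 * (2 * α - 1)) * Real.Gamma (α / (2 * α - 1))) with hQ
    set Pg := (ascPochhammer ℝ m).eval (α / (2 * α - 1) - 1 / 2) with hPg
    set Pb := (ascPochhammer ℝ m).eval (1/2 : ℝ) with hPbd
    set P := ((2 * α - 1) / 2) ^ m with hP
    set F := (Nat.factorial m : ℝ) with hF'
    push_cast
    have h1 : Pb ≠ 0 := ne_of_gt hPb
    have h2 : F ≠ 0 := ne_of_gt hF
    have h3 : (2 * α - 1) ≠ 0 := ne_of_gt hk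
    have h4 : Pb + (1/2 + (m:ℝ)) ≠ 0 := by positivity
    field_simp
    ring
  · obtain ⟨m, rfl⟩ := ho
    rw [show 2 * m + 1 + 2 = 2 * (m + 1) + 1 from by ring]
    rw [co_odd α (m + 1), co_odd α m, ascPochhammer_succ_eval, ascPochhammer_succ_eval,
      pow_succ, Nat.factorial_succ]
    have hPb : (0:ℝ) < (ascPochhammer ℝ m).eval (3/2 : ℝ) :=
      ascPochhammer_pos m _ (by norm_num)
    have hF : (0:ℝ) < (Nat.factorial m : ℝ) := by exact_mod_cast Nat.factorial_pos m
    set Pg := (ascPochhammer ℝ m).eval (α / (2 * α - 1)) with hPg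
    set Pb := (ascPochhammer ℝ m).eval (3/2 : ℝ) with hPbd
    set P := ((2 * α - 1) / 2) ^ m with hP
    set F := (Nat.factorial m : ℝ) with hF'
    push_cast
    have h1 : Pb ≠ 0 := ne_of_gt hPb
    have h2 : F ≠ 0 := ne_of_gt hF
    have h3 : (2 * α - 1) ≠ 0 := ne_of_gt hk
    field_simp
    ring


lemma gammaE_pos {α : ℝ} (hα : 1 / 2 < α) : 0 < α / (2 * α - 1) - 1 / 2 := by
  have hk : (0:ℝ) < 2 * α - 1 := by linarith
  have h : α / (2 * α - 1) - 1 / 2 = 1 / (2 * (2 * α - 1)) := by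
    rw [div_sub_div _ _ hk.ne' (by norm_num), div_eq_div_iff (by positivity) (by positivity)]; ring
  rw [h]; positivity

lemma Pc_co {α : ℝ} (hα : 1 / 2 < α) : Pc (co α) := by
  intro r hr
  have hk : (0:ℝ) < 2 * α - 1 := by linarith
  have hγ : 0 < α / (2 * α - 1) := div_pos (by linarith) hk
  have hγe : 0 < α / (2 * α - 1) - 1 / 2 := gammaE_pos hα
  have hK : (0:ℝ) < (2 * α - 1) / 2 := by positivity
  refine Summable.even_add_odd ?_ ?_
  · refine Summable.congr
      ((summable_half hγe (by norm_num : (0:ℝ) < 1/2) hK hr).mul_left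
        |Real.Gamma (α / (2 * α - 1) - 1 / 2) /
          (Real.sqrt (2 * (2 * α - 1)) * Real.Gamma (α / (2 * α - 1)))|) (fun m => ?_)
    have hPg := ascPochhammer_pos m _ hγe
    have hPb := ascPochhammer_pos m (1/2 : ℝ) (by norm_num)
    have hF : (0:ℝ) < (Nat.factorial m : ℝ) := by exact_mod_cast Nat.factorial_pos m
    have hA : (0:ℝ) ≤ (ascPochhammer ℝ m).eval (α / (2*α-1) - 1/2) * ((2*α-1)/2) ^ m := by
      positivity
    have hB : (0:ℝ) ≤ (ascPochhammer ℝ m).eval (1/2 : ℝ) * (Nat.factorial m : ℝ) := by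
      positivity
    rw [co_even]
    conv_rhs => rw [abs_div, abs_mul, abs_of_nonneg hA, abs_of_nonneg hB]
    ring
  · refine Summable.congr
      ((summable_half hγ (by norm_num : (0:ℝ) < 3/2) hK hr).mul_right r) (fun m => ?_)
    have hPg := ascPochhammer_pos m _ hγ
    have hPb := ascPochhammer_pos m (3/2 : ℝ) (by norm_num)
    have hF : (0:ℝ) < (Nat.factorial m : ℝ) := by exact_mod_cast Nat.factorial_pos m
    have hnn : (0:ℝ) ≤ (ascPochhammer ℝ m).eval (α / (2*α-1)) * ((2*α-1)/2) ^ m /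
        ((ascPochhammer ℝ m).eval (3/2 : ℝ) * (Nat.factorial m : ℝ)) := by positivity
    rw [co_odd, abs_of_nonneg hnn, pow_succ]
    ring

lemma G_eq {α : ℝ} (hα : 1 / 2 < α) (y : ℝ) : G α y = ∑' n, co α n * y ^ n := by
  have hsum := (Pc_co hα).summable y
  have he : Summable (fun m => co α (2 * m) * y ^ (2 * m)) :=
    hsum.comp_injective (i := fun m : ℕ => 2 * m) (fun a b h => by dsimp at h; omega)
  have ho : Summable (fun m => co α (2 * m + 1) * y ^ (2 * m + 1)) :=
    hsum.comp_injective (i := fun m : ℕ => 2 * m + 1) (fun a b h => by dsimp at h; omega)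
  have key := tsum_even_add_odd (f := fun n => co α n * y ^ n) he ho
  rw [← key]
  unfold G M
  have hbase : y ^ 2 * (2 * α - 1) / 2 = ((2 * α - 1) / 2) * y ^ 2 := by ring
  have hodd : y * ∑' m : ℕ, ((ascPochhammer ℝ m).eval (α / (2 * α - 1)) *
      (y ^ 2 * (2 * α - 1) / 2) ^ m) /
      ((ascPochhammer ℝ m).eval (3 / 2 : ℝ) * (Nat.factorial m : ℝ)) =
      ∑' m : ℕ, co α (2 * m + 1) * y ^ (2 * m + 1) := by
    rw [← tsum_mul_left]
    refine tsum_congr fun m => ?_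
    rw [co_odd, hbase, mul_pow, ← pow_mul, pow_succ]
    ring
  have heven : Real.Gamma (α / (2 * α - 1) - 1 / 2) /
      (Real.sqrt (2 * (2 * α - 1)) * Real.Gamma (α / (2 * α - 1))) *
      ∑' m : ℕ, ((ascPochhammer ℝ m).eval (α / (2 * α - 1) - 1 / 2) *
      (y ^ 2 * (2 * α - 1) / 2) ^ m) /
      ((ascPochhammer ℝ m).eval (1 / 2 : ℝ) * (Nat.factorial m : ℝ)) =
      ∑' m : ℕ, co α (2 * m) * y ^ (2 * m) := by
    rw [← tsum_mul_left]
    refine tsum_congr fun m => ?_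
    rw [co_even, hbase, mul_pow, ← pow_mul]
    ring
  rw [hodd, heven, add_comm]

end AuxHelpers

theorem stmt_3 (α : ℝ) (hα : 1 / 2 < α) (C : ℝ) :
    ContDiff ℝ 2 (fun y => C * G α y) ∧
    ∀ y : ℝ,
      deriv (deriv (fun y => C * G α y)) y - (2 * α - 1) * y * deriv (fun y => C * G α y) y -
        C * G α y = 0 := by
  set d : ℕ → ℝ := fun n => C * co α n with hd
  have hfd : (fun y => C * G α y) = fun y => ∑' n, d n * y ^ n := by
    funext y
    rw [G_eq hα y, ← tsum_mul_left]
    exact tsum_congr fun n => by rw [hd]; ring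
  have hPd : Pc d := by
    intro r hr
    refine Summable.congr (((Pc_co hα) r hr).mul_left |C|) (fun n => ?_)
    rw [hd]
    simp only [abs_mul]
    ring
  have rec_d : ∀ n : ℕ, ((n : ℝ) + 1) * ((n : ℝ) + 2) * d (n + 2) =
      ((2 * α - 1) * n + 1) * d n := by
    intro n
    have := rec_co hα n
    simp only [hd]
    linear_combination C * this
  constructor
  · rw [hfd]; exact contDiff_two_S hPd
  · intro y
    rw [hfd, deriv_S hPd, deriv_S hPd.shift,
      show C * G α y = ∑' n, d n * y ^ n from congrFun hfd y]
    change (∑' n, sh (sh d) n * y ^ n) - (2 * α - 1) * y * (∑' n, sh d n * y ^ n) -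
      (∑' n, d n * y ^ n) = 0
    have hS1 : Summable (fun n => sh (sh d) n * y ^ n) := (hPd.shift.shift).summable y
    have hS2 : Summable (fun n : ℕ => (2 * α - 1) * ((n : ℝ) * d n) * y ^ n) := by
      refine Summable.congr (((hPd.mul_nat).summable y).mul_left (2 * α - 1)) (fun n => ?_)
      ring
    have hS3 : Summable (fun n => d n * y ^ n) := hPd.summable y
    have hmid : (2 * α - 1) * y * (∑' n, sh d n * y ^ n) =
        ∑' n : ℕ, (2 * α - 1) * ((n : ℝ) * d n) * y ^ n := by
      rw [hS2.tsum_eq_zero_add]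
      simp only [Nat.cast_zero, zero_mul, mul_zero, pow_zero, zero_add, mul_one]
      rw [← tsum_mul_left]
      refine tsum_congr fun n => ?_
      simp only [sh]
      push_cast
      rw [pow_succ]
      ring
    rw [hmid, ← Summable.tsum_sub hS1 hS2, ← Summable.tsum_sub (hS1.sub hS2) hS3]
    have hzero : ∀ n : ℕ, sh (sh d) n * y ^ n -
        (2 * α - 1) * ((n : ℝ) * d n) * y ^ n - d n * y ^ n = 0 := by
      intro n
      have hr := rec_d n
      have hsh : sh (sh d) n = ((n : ℝ) + 1) * (((n : ℝ) + 1) + 1) * d (n + 2) := by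
        simp only [sh]
        push_cast
        ring
      have hco : sh (sh d) n = ((2 * α - 1) * n + 1) * d n := by
        rw [hsh]
        rw [show ((n : ℝ) + 1) * (((n : ℝ) + 1) + 1) = ((n : ℝ) + 1) * ((n : ℝ) + 2) from by ring]
        exact hr
      rw [hco]
      ring
    rw [tsum_congr hzero, tsum_zero]
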